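/- Let m be a nonnegative integer and let a_1 < a_2 < ... < a_{m+1} be real numbers with a_{i+1} − a_i ≥ √(4 − 6/(m+2)) for i = 1, ..., m. Then 4·(Σ_{i=1}^{m+1} a_i)² − 4(m+1)·Σ_{i=1}^{m+1} a_i² + (m+1)·C(2m+2, 3) ≤ 0, where C(2m+2,3) denotes the binomial coefficient (2m+2 choose 3). -/
import Mathlib

lemma sumsq_aux (n : ℕ) (f : Fin n → ℝ) :
    ∑ i, ∑ j, (f j - f i) ^ 2 =
      2 * (n : ℝ) * (∑ i, (f i) ^ 2) - 2 * (∑ i, f i) ^ 2 := by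
  have h : ∀ i : Fin n, ∑ j, (f j - f i) ^ 2 =
      (∑ j, (f j) ^ 2) - (∑ j, f j) * (2 * f i) + (n : ℝ) * (f i) ^ 2 := by
    intro i
    have e : ∀ j : Fin n, (f j - f i) ^ 2 = (f j) ^ 2 - f j * (2 * f i) + (f i) ^ 2 := by
      intro j; ring
    simp only [e, Finset.sum_add_distrib, Finset.sum_sub_distrib,
      Finset.sum_const, Finset.card_univ, Fintype.card_fin, ← Finset.sum_mul,
      nsmul_eq_mul]
  rw [Finset.sum_congr rfl fun i _ => h i]
  simp only [Finset.sum_add_distrib, Finset.sum_sub_distrib, Finset.sum_const,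
    Finset.card_univ, Fintype.card_fin, nsmul_eq_mul, ← Finset.mul_sum]
  ring

lemma sum_id_fin (n : ℕ) : ∑ i : Fin n, (i : ℝ) = n * (n - 1) / 2 := by
  induction n with
  | zero => simp
  | succ n ih =>
    rw [Fin.sum_univ_castSucc]
    simp only [Fin.coe_castSucc, ih, Fin.val_last]
    push_cast; ring

lemma sum_sq_fin (n : ℕ) : ∑ i : Fin n, (i : ℝ) ^ 2 = n * (n - 1) * (2 * n - 1) / 6 := by
  induction n with
  | zero => simp
  | succ n ih =>
    rw [Fin.sum_univ_castSucc]
    simp only [Fin.coe_castSucc, ih, Fin.val_last]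
    push_cast; ring

lemma choose_three (m : ℕ) :
    ((2 * m + 2).choose 3 : ℝ) = (2 * m + 2) * (2 * m + 1) * (2 * m) / 6 := by
  have h : 6 * (2 * m + 2).choose 3 = (2 * m + 2) * (2 * m + 1) * (2 * m) := by
    have hd : (2 * m + 2).descFactorial 3 = (2 * m + 2) * (2 * m + 1) * (2 * m) := by
      simp [Nat.descFactorial]; ring
    have hdvd := Nat.factorial_dvd_descFactorial (2 * m + 2) 3
    have hfac : Nat.factorial 3 = 6 := rfl
    rw [Nat.choose_eq_descFactorial_div_factorial, hfac,
      Nat.mul_div_cancel' (hfac ▸ hdvd), hd]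
  have := congrArg (fun x : ℕ => (x : ℝ)) h
  push_cast at this
  linarith

theorem stmt_10 (m : ℕ) (a : Fin (m + 1) → ℝ) (hmono : StrictMono a)
    (hgap : ∀ i : Fin m,
      Real.sqrt (4 - 6 / ((m : ℝ) + 2)) ≤ a i.succ - a i.castSucc) :
    4 * (∑ i, a i) ^ 2 - 4 * ((m : ℝ) + 1) * (∑ i, (a i) ^ 2) +
      ((m : ℝ) + 1) * ((2 * m + 2).choose 3 : ℝ) ≤ 0 := by
  set δ := Real.sqrt (4 - 6 / ((m : ℝ) + 2)) with hδ
  have hm2 : (0 : ℝ) < (m : ℝ) + 2 := by positivity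
  have hnn : (0 : ℝ) ≤ 4 - 6 / ((m : ℝ) + 2) := by
    rw [sub_nonneg, div_le_iff₀ hm2]
    nlinarith [Nat.cast_nonneg (α := ℝ) m]
  have hδ0 : 0 ≤ δ := Real.sqrt_nonneg _
  have hδ2 : δ ^ 2 = 4 - 6 / ((m : ℝ) + 2) := Real.sq_sqrt hnn
  -- chain lemma
  have key : ∀ k : ℕ, ∀ i j : Fin (m + 1), (j : ℕ) = (i : ℕ) + k →
      (k : ℝ) * δ ≤ a j - a i := by
    intro k
    induction k with
    | zero =>
      intro i j h
      have : i = j := Fin.ext (by omega)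
      subst this; simp
    | succ k ih =>
      intro i j h
      have hik : (i : ℕ) + k < m := by omega
      set p : Fin (m + 1) := ⟨(i : ℕ) + k, by omega⟩ with hp
      set q : Fin m := ⟨(i : ℕ) + k, hik⟩ with hq
      have h1 : (k : ℝ) * δ ≤ a p - a i := ih i p rfl
      have h2 : δ ≤ a q.succ - a q.castSucc := hgap q
      have e1 : q.castSucc = p := Fin.ext rfl
      have e2 : q.succ = j := Fin.ext (by simp [Fin.val_succ, hq]; omega)
      rw [e1, e2] at h2
      push_cast
      linarith
  have pairle : ∀ i j : Fin (m + 1), (i : ℕ) ≤ (j : ℕ) →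
      δ ^ 2 * ((j : ℝ) - (i : ℝ)) ^ 2 ≤ (a j - a i) ^ 2 := by
    intro i j hij
    have h1 := key ((j : ℕ) - (i : ℕ)) i j (by omega)
    have h2 : (((j : ℕ) - (i : ℕ) : ℕ) : ℝ) = (j : ℝ) - (i : ℝ) := by
      push_cast [Nat.cast_sub hij]; ring
    rw [h2] at h1
    have ht : (0 : ℝ) ≤ (j : ℝ) - (i : ℝ) := by
      rw [sub_nonneg]; exact_mod_cast hij
    nlinarith [mul_nonneg ht hδ0]
  have pair : ∀ i j : Fin (m + 1),
      δ ^ 2 * ((j : ℝ) - (i : ℝ)) ^ 2 ≤ (a j - a i) ^ 2 := by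
    intro i j
    rcases le_total (i : ℕ) (j : ℕ) with h | h
    · exact pairle i j h
    · have := pairle j i h
      nlinarith [this]
  -- sum everything
  have hsum : δ ^ 2 * (∑ i : Fin (m + 1), ∑ j : Fin (m + 1), ((j : ℝ) - (i : ℝ)) ^ 2) ≤
      ∑ i : Fin (m + 1), ∑ j : Fin (m + 1), (a j - a i) ^ 2 := by
    rw [Finset.mul_sum]
    refine Finset.sum_le_sum fun i _ => ?_
    rw [Finset.mul_sum]
    exact Finset.sum_le_sum fun j _ => pair i j
  have hA : ∑ i : Fin (m + 1), ∑ j : Fin (m + 1), ((j : ℝ) - (i : ℝ)) ^ 2 =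
      ((m : ℝ) + 1) ^ 2 * m * ((m : ℝ) + 2) / 6 := by
    rw [sumsq_aux (m + 1) (fun i => (i : ℝ)), sum_sq_fin, sum_id_fin]
    push_cast; ring
  have hB := sumsq_aux (m + 1) a
  rw [hA, hB] at hsum
  rw [choose_three m]
  have hkey : δ ^ 2 * (((m : ℝ) + 1) ^ 2 * m * ((m : ℝ) + 2) / 6) =
      ((m : ℝ) + 1) * ((2 * (m : ℝ) + 2) * (2 * (m : ℝ) + 1) * (2 * (m : ℝ))) / 6 / 2 := by
    rw [hδ2]
    field_simp
    ring
  push_cast at hsum ⊢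
  nlinarith [hsum, hkey]
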